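/- Let H be a real Hilbert space, X a measurable space, K : X → H a map, and μ a finite measure on X × ℝ. Fix λ > 0 and define L(f) = ∫ (⟪f, K x⟫ − y)² dμ(x, y) + λ‖f‖² for f ∈ H, assuming the integrand is μ-integrable for every f ∈ H. If f̂ ∈ H is a minimizer of L over H, then for every f ∈ H one has L(f) = L(f̂) + ∫ ⟪f − f̂, K x⟫² dμ(x, y) + λ‖f − f̂‖²; in particular L(f) − L(f̂) ≥ λ‖f − f̂‖². -/

import Mathlib

open MeasureTheory

theorem stmt_2 {H X : Type*} [NormedAddCommGroup H] [InnerProductSpace ℝ H] [CompleteSpace H]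
    [MeasurableSpace X]
    (K : X → H) (μ : Measure (X × ℝ)) [IsFiniteMeasure μ]
    (lam : ℝ) (hlam : 0 < lam)
    (L : H → ℝ)
    (hL : ∀ f : H, L f = ∫ p : X × ℝ, ((inner ℝ f (K p.1) : ℝ) - p.2) ^ 2 ∂μ + lam * ‖f‖ ^ 2)
    (hint : ∀ f : H, Integrable (fun p : X × ℝ => ((inner ℝ f (K p.1) : ℝ) - p.2) ^ 2) μ)
    (fhat : H) (hmin : ∀ f : H, L fhat ≤ L f) :
    (∀ f : H, L f = L fhat + ∫ p : X × ℝ, (inner ℝ (f - fhat) (K p.1) : ℝ) ^ 2 ∂μ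
        + lam * ‖f - fhat‖ ^ 2) ∧
    (∀ f : H, lam * ‖f - fhat‖ ^ 2 ≤ L f - L fhat) := by
  have key : ∀ f : H, L f = L fhat + ∫ p : X × ℝ, (inner ℝ (f - fhat) (K p.1) : ℝ) ^ 2 ∂μ
      + lam * ‖f - fhat‖ ^ 2 := by
    intro f
    set g := f - fhat with hg
    have hA : Integrable (fun p : X × ℝ => ((inner ℝ fhat (K p.1) : ℝ) - p.2) ^ 2) μ := hint fhat
    have hf : Integrable (fun p : X × ℝ => ((inner ℝ f (K p.1) : ℝ) - p.2) ^ 2) μ := hint f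
    have hm : Integrable
        (fun p : X × ℝ => ((inner ℝ ((2:ℝ)⁻¹ • (fhat + f)) (K p.1) : ℝ) - p.2) ^ 2) μ := hint _
    have hinner_m : ∀ p : X × ℝ, (inner ℝ ((2:ℝ)⁻¹ • (fhat + f)) (K p.1) : ℝ)
        = (2:ℝ)⁻¹ * ((inner ℝ fhat (K p.1) : ℝ) + (inner ℝ f (K p.1) : ℝ)) := by
      intro p; rw [real_inner_smul_left, inner_add_left]
    have hinner_g : ∀ p : X × ℝ, (inner ℝ g (K p.1) : ℝ)
        = (inner ℝ f (K p.1) : ℝ) - (inner ℝ fhat (K p.1) : ℝ) := by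
      intro p; rw [hg, inner_sub_left]
    have hC2 : Integrable (fun p : X × ℝ => (inner ℝ g (K p.1) : ℝ) ^ 2) μ := by
      have h1 := ((hf.const_mul 2).add (hA.const_mul 2)).sub (hm.const_mul 4)
      refine h1.congr ?_
      filter_upwards with p
      simp only [Pi.add_apply, Pi.sub_apply]
      rw [hinner_g p, hinner_m p]; ring
    have hcross : Integrable
        (fun p : X × ℝ => ((inner ℝ fhat (K p.1) : ℝ) - p.2) * (inner ℝ g (K p.1) : ℝ)) μ := by
      have h1 := (hm.sub hA).sub (hC2.const_mul (4⁻¹))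
      refine h1.congr ?_
      filter_upwards with p
      simp only [Pi.add_apply, Pi.sub_apply]
      rw [hinner_g p, hinner_m p]; ring
    set Cr := ∫ p : X × ℝ, ((inner ℝ fhat (K p.1) : ℝ) - p.2) * (inner ℝ g (K p.1) : ℝ) ∂μ with hCr
    set Cq := ∫ p : X × ℝ, (inner ℝ g (K p.1) : ℝ) ^ 2 ∂μ with hCq
    have hquad : ∀ t : ℝ, ∫ p : X × ℝ, ((inner ℝ (fhat + t • g) (K p.1) : ℝ) - p.2) ^ 2 ∂μ
        = (∫ p : X × ℝ, ((inner ℝ fhat (K p.1) : ℝ) - p.2) ^ 2 ∂μ) + t * (2 * Cr) + t ^ 2 * Cq := by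
      intro t
      have h1 : (fun p : X × ℝ => ((inner ℝ (fhat + t • g) (K p.1) : ℝ) - p.2) ^ 2)
          = fun p : X × ℝ => ((inner ℝ fhat (K p.1) : ℝ) - p.2) ^ 2
            + t * (2 * (((inner ℝ fhat (K p.1) : ℝ) - p.2) * (inner ℝ g (K p.1) : ℝ)))
            + t ^ 2 * (inner ℝ g (K p.1) : ℝ) ^ 2 := by
        funext p
        rw [inner_add_left, real_inner_smul_left]; ring
      have i2 : Integrable (fun p : X × ℝ =>
          t * (2 * (((inner ℝ fhat (K p.1) : ℝ) - p.2) * (inner ℝ g (K p.1) : ℝ)))) μ :=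
        (hcross.const_mul 2).const_mul t
      have i3 : Integrable (fun p : X × ℝ => t ^ 2 * (inner ℝ g (K p.1) : ℝ) ^ 2) μ :=
        hC2.const_mul (t ^ 2)
      have i1 : Integrable (fun p : X × ℝ => ((inner ℝ fhat (K p.1) : ℝ) - p.2) ^ 2
          + t * (2 * (((inner ℝ fhat (K p.1) : ℝ) - p.2) * (inner ℝ g (K p.1) : ℝ)))) μ :=
        hA.add i2
      rw [h1, integral_add i1 i3, integral_add hA i2, integral_const_mul,
        integral_const_mul, integral_const_mul]
    have hnorm : ∀ t : ℝ, ‖fhat + t • g‖ ^ 2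
        = ‖fhat‖ ^ 2 + t * (2 * (inner ℝ fhat g : ℝ)) + t ^ 2 * ‖g‖ ^ 2 := by
      intro t
      rw [norm_add_sq_real, real_inner_smul_right, norm_smul, mul_pow, Real.norm_eq_abs, sq_abs]
      ring
    set B := 2 * Cr + lam * (2 * (inner ℝ fhat g : ℝ)) with hB
    set Q := Cq + lam * ‖g‖ ^ 2 with hQ
    have hLt : ∀ t : ℝ, L (fhat + t • g) = L fhat + t * B + t ^ 2 * Q := by
      intro t
      rw [hL, hL fhat, hquad t, hnorm t, hB, hQ]; ring
    have hpos : ∀ t : ℝ, 0 ≤ t * B + t ^ 2 * Q := by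
      intro t
      have h := hmin (fhat + t • g)
      rw [hLt t] at h
      linarith
    have hCq0 : 0 ≤ Cq := integral_nonneg fun p => sq_nonneg _
    have hQ0 : 0 ≤ Q := by
      have : 0 ≤ lam * ‖g‖ ^ 2 := by positivity
      rw [hQ]; linarith
    have hB0 : B = 0 := by
      have hd : (0:ℝ) < 2 * Q + 1 := by linarith
      have h := hpos (-B / (2 * Q + 1))
      have heq : (-B / (2 * Q + 1)) * B + (-B / (2 * Q + 1)) ^ 2 * Q
          = (-(B ^ 2) * (2 * Q + 1) + B ^ 2 * Q) / (2 * Q + 1) ^ 2 := by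
        field_simp
      rw [heq] at h
      have hden : (0:ℝ) < (2 * Q + 1) ^ 2 := by positivity
      have hnum : 0 ≤ -(B ^ 2) * (2 * Q + 1) + B ^ 2 * Q := by
        have h2 := mul_nonneg h hden.le
        rwa [div_mul_cancel₀ _ (ne_of_gt hden)] at h2
      nlinarith [sq_nonneg B]
    have h1 := hLt 1
    have hfe : fhat + (1:ℝ) • g = f := by rw [one_smul, hg, add_sub_cancel]
    rw [hfe] at h1
    rw [h1, hB0, hQ]; ring
  refine ⟨key, fun f => ?_⟩
  have h := key f
  have h0 : 0 ≤ ∫ p : X × ℝ, (inner ℝ (f - fhat) (K p.1) : ℝ) ^ 2 ∂μ :=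
    integral_nonneg fun p => sq_nonneg _
  linarith
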